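/- arXiv:math/9804050 — 2 statements merged into one kernel-verified Lean document; each statement's English description precedes it below -/
import Mathlib

section
/- Let p be a prime and s a real number. Writing I(s) = ∫⁻_{ℤ_p} ‖z‖^s dμ ∈ [0, ∞] for the lower Lebesgue integral of z ↦ ‖z‖^s against the normalized Haar measure μ on ℤ_p, one has the functional equation I(s) = p^{-(s+1)} · I(s) + (1 - 1/p), as an identity in the extended nonnegative reals. (This is equation (2.15) of the paper, obtained by splitting ℤ_p into pℤ_p and the units and using the scaling behaviour of μ under multiplication by p.) -/
set_option maxHeartbeats 1000000


open MeasureTheory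
open scoped ENNReal

variable (p : ℕ) [Fact p.Prime]

noncomputable instance : MeasurableSpace ℤ_[p] := borel _
instance : BorelSpace ℤ_[p] := ⟨rfl⟩

namespace PadicHaarAux

/-- The closed ball of radius `p^{-k}` in `ℤ_p`. -/
def B (k : ℕ) : Set ℤ_[p] := {z | ‖z‖ ≤ (p : ℝ) ^ (-(k : ℤ))}

/-- The sphere of radius `p^{-k}` in `ℤ_p`. -/
def S (k : ℕ) : Set ℤ_[p] := {z | ‖z‖ = (p : ℝ) ^ (-(k : ℤ))}

lemma mem_B_iff (k : ℕ) (x : ℤ_[p]) :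
    x ∈ B p k ↔ PadicInt.toZModPow k x = 0 := by
  rw [show x ∈ B p k ↔ ‖x‖ ≤ (p : ℝ) ^ (-(k : ℤ)) from Iff.rfl,
    PadicInt.norm_le_pow_iff_mem_span_pow, ← PadicInt.ker_toZModPow, RingHom.mem_ker]

lemma measurableSet_B (k : ℕ) : MeasurableSet (B p k) :=
  (isClosed_le continuous_norm continuous_const).measurableSet

lemma measurableSet_S (k : ℕ) : MeasurableSet (S p k) :=
  (isClosed_eq continuous_norm continuous_const).measurableSet

variable (μ : Measure ℤ_[p]) [μ.IsAddHaarMeasure]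

lemma measure_B (hμ : μ Set.univ = 1) (k : ℕ) : μ (B p k) = ((p : ℝ≥0∞) ^ k)⁻¹ := by
  have hp : p.Prime := Fact.out
  haveI : NeZero (p ^ k) := ⟨pow_ne_zero _ hp.ne_zero⟩
  set F : ZMod (p ^ k) → Set ℤ_[p] := fun c => PadicInt.toZModPow k ⁻¹' {c} with hF
  have htrans : ∀ c : ZMod (p ^ k), ∃ x : ℤ_[p], F c = (fun y => -x + y) ⁻¹' B p k := by
    intro c
    obtain ⟨x, hx⟩ := ZMod.ringHom_surjective (PadicInt.toZModPow k (p := p)) c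
    refine ⟨x, ?_⟩
    ext y
    simp only [hF, Set.mem_preimage, Set.mem_singleton_iff, mem_B_iff, map_add, map_neg, hx]
    rw [neg_add_eq_zero]
    exact eq_comm
  have hFmeas : ∀ c, MeasurableSet (F c) := by
    intro c
    obtain ⟨x, hx⟩ := htrans c
    rw [hx]
    exact (measurableSet_B p k).preimage ((continuous_add_left (-x)).measurable)
  have hFμ : ∀ c, μ (F c) = μ (B p k) := by
    intro c
    obtain ⟨x, hx⟩ := htrans c
    rw [hx]
    exact measure_preimage_add μ (-x) (B p k)
  have hcover : (Set.univ : Set ℤ_[p]) = ⋃ c, F c := by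
    ext x
    simp [hF]
  have hdisj : Pairwise (Function.onFun Disjoint F) := by
    intro a b hab
    refine Set.disjoint_left.2 fun x hxa hxb => hab ?_
    simp only [hF, Set.mem_preimage, Set.mem_singleton_iff] at hxa hxb
    rw [← hxa, hxb]
  have hsum : (1 : ℝ≥0∞) = ((p : ℝ≥0∞) ^ k) * μ (B p k) := by
    calc (1 : ℝ≥0∞) = μ Set.univ := hμ.symm
      _ = μ (⋃ c, F c) := by rw [← hcover]
      _ = ∑' c, μ (F c) := measure_iUnion hdisj hFmeas
      _ = ∑ c : ZMod (p ^ k), μ (F c) := tsum_fintype _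
      _ = ∑ _c : ZMod (p ^ k), μ (B p k) := by simp [hFμ]
      _ = (p ^ k : ℕ) • μ (B p k) := by rw [Finset.sum_const, Finset.card_univ, ZMod.card]
      _ = ((p : ℝ≥0∞) ^ k) * μ (B p k) := by rw [nsmul_eq_mul]; push_cast; ring
  have hne0 : ((p : ℝ≥0∞) ^ k) ≠ 0 := pow_ne_zero _ (by exact_mod_cast hp.ne_zero)
  have hnet : ((p : ℝ≥0∞) ^ k) ≠ ⊤ := by
    exact ENNReal.pow_ne_top (ENNReal.natCast_ne_top p)
  calc μ (B p k) = ((p : ℝ≥0∞) ^ k)⁻¹ * (((p : ℝ≥0∞) ^ k) * μ (B p k)) := by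
        rw [← mul_assoc, ENNReal.inv_mul_cancel hne0 hnet, one_mul]
    _ = ((p : ℝ≥0∞) ^ k)⁻¹ := by rw [← hsum, mul_one]

lemma S_eq_diff (k : ℕ) : S p k = B p k \ B p (k + 1) := by
  have hpR : (1 : ℝ) < p := by exact_mod_cast (Fact.out : p.Prime).one_lt
  ext z
  constructor
  · rintro (hz : ‖z‖ = (p : ℝ) ^ (-(k : ℤ)))
    refine ⟨le_of_eq hz, fun hz' => ?_⟩
    have hz'' : ‖z‖ ≤ (p : ℝ) ^ (-((k + 1 : ℕ)) : ℤ) := hz'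
    rw [hz] at hz''
    exact absurd hz'' (not_le.2 (zpow_lt_zpow_right₀ hpR (by push_cast; omega)))
  · rintro ⟨h1, h2⟩
    have h2' : ¬ ‖z‖ < (p : ℝ) ^ (-(k : ℤ)) := by
      intro hlt
      apply h2
      show ‖z‖ ≤ (p : ℝ) ^ (-((k : ℕ) + 1 : ℕ) : ℤ)
      rw [PadicInt.norm_le_pow_iff_norm_lt_pow_add_one]
      convert hlt using 2
      push_cast; ring
    exact le_antisymm h1 (not_lt.1 h2')

lemma measure_S (hμ : μ Set.univ = 1) (k : ℕ) :
    μ (S p k) = ((p : ℝ≥0∞) ^ k)⁻¹ - ((p : ℝ≥0∞) ^ (k + 1))⁻¹ := by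
  have hpR : (1 : ℝ) < p := by exact_mod_cast (Fact.out : p.Prime).one_lt
  have hsub : B p (k + 1) ⊆ B p k := by
    intro z hz
    exact le_trans hz (zpow_le_zpow_right₀ hpR.le (by omega))
  rw [S_eq_diff, measure_diff hsub (measurableSet_B p (k + 1)).nullMeasurableSet
    (by rw [measure_B p μ hμ]; exact ENNReal.inv_ne_top.2 (pow_ne_zero _ (by
      exact_mod_cast (Fact.out : p.Prime).ne_zero))), measure_B p μ hμ, measure_B p μ hμ]

lemma iUnion_S : (⋃ k, S p k) = ({0} : Set ℤ_[p])ᶜ := by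
  have hp0R : (0 : ℝ) < p := by exact_mod_cast (Fact.out : p.Prime).pos
  ext z
  simp only [Set.mem_iUnion, Set.mem_compl_iff, Set.mem_singleton_iff]
  constructor
  · rintro ⟨k, (hk : ‖z‖ = (p : ℝ) ^ (-(k : ℤ)))⟩ rfl
    rw [norm_zero] at hk
    exact absurd hk.symm (ne_of_gt (zpow_pos hp0R _))
  · intro hz
    refine ⟨z.valuation, ?_⟩
    show ‖z‖ = (p : ℝ) ^ (-(z.valuation : ℤ))
    exact PadicInt.norm_eq_zpow_neg_valuation hz

lemma measure_zero_singleton (hμ : μ Set.univ = 1) : μ ({0} : Set ℤ_[p]) = 0 := by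
  have hb : ∀ k : ℕ, μ {0} ≤ ((p : ℝ≥0∞)⁻¹) ^ k := by
    intro k
    rw [← ENNReal.inv_pow, ← measure_B p μ hμ k]
    apply measure_mono
    rintro z rfl
    show ‖(0 : ℤ_[p])‖ ≤ (p : ℝ) ^ (-(k : ℤ))
    rw [norm_zero]
    positivity
  have hlt : (p : ℝ≥0∞)⁻¹ < 1 :=
    ENNReal.inv_lt_one.2 (by exact_mod_cast (Fact.out : p.Prime).one_lt)
  have ht := ENNReal.tendsto_pow_atTop_nhds_zero_of_lt_one hlt
  exact le_zero_iff.1 (ge_of_tendsto' ht hb)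

end PadicHaarAux

/-- The functional equation `I(s) = p^{-(s+1)} · I(s) + (1 - 1/p)` for the lower Lebesgue
integral `I(s) = ∫⁻_{ℤ_p} ‖z‖^s dμ`, as an identity in `[0, ∞]`.  (Equation (2.15).) -/
theorem lintegral_norm_rpow_functional_equation (μ : Measure ℤ_[p]) [μ.IsAddHaarMeasure]
    (hμ : μ Set.univ = 1) (s : ℝ) :
    ∫⁻ z : ℤ_[p], ENNReal.ofReal (‖z‖ ^ s) ∂μ =
      (p : ℝ≥0∞) ^ (-(s + 1)) * ∫⁻ z : ℤ_[p], ENNReal.ofReal (‖z‖ ^ s) ∂μ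
        + (1 - (p : ℝ≥0∞)⁻¹) := by
  have hp : p.Prime := Fact.out
  have hp0R : (0 : ℝ) < p := by exact_mod_cast hp.pos
  set c : ℝ≥0∞ := (p : ℝ≥0∞)⁻¹ with hc
  set t : ℝ≥0∞ := ENNReal.ofReal ((p : ℝ) ^ (-s)) with ht
  have hcne : c ≠ ⊤ := ENNReal.inv_ne_top.2 (by exact_mod_cast hp.ne_zero)
  -- each term of the integrand viewed on a sphere
  have hterm : ∀ k : ℕ, ENNReal.ofReal (((p : ℝ) ^ (-(k : ℤ))) ^ s) = t ^ k := by
    intro k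
    rw [show ((p : ℝ) ^ (-(k : ℤ)) : ℝ) = (p : ℝ) ^ ((-(k : ℤ) : ℤ) : ℝ) from
      (Real.rpow_intCast _ _).symm, ← Real.rpow_mul hp0R.le,
      show ((-(k : ℤ) : ℤ) : ℝ) * s = (-s) * (k : ℝ) by push_cast; ring,
      Real.rpow_mul hp0R.le, Real.rpow_natCast,
      ENNReal.ofReal_pow (Real.rpow_nonneg hp0R.le _)]
  -- the main sphere decomposition
  have hI : ∫⁻ z : ℤ_[p], ENNReal.ofReal (‖z‖ ^ s) ∂μ = ∑' k : ℕ, (t * c) ^ k * (1 - c) := by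
    have h1 : (Set.univ : Set ℤ_[p]) =ᵐ[μ] ⋃ k, PadicHaarAux.S p k := by
      rw [MeasureTheory.ae_eq_set]
      constructor
      · rw [PadicHaarAux.iUnion_S, Set.diff_compl, Set.univ_inter]
        exact PadicHaarAux.measure_zero_singleton p μ hμ
      · simp
    have hdisj : Pairwise (Function.onFun Disjoint (PadicHaarAux.S p)) := by
      intro a b hab
      refine Set.disjoint_left.2 fun z hza hzb => hab ?_
      have hza' : ‖z‖ = (p : ℝ) ^ (-(a : ℤ)) := hza
      have hzb' : ‖z‖ = (p : ℝ) ^ (-(b : ℤ)) := hzb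
      have : (-(a : ℤ)) = (-(b : ℤ)) := by
        have h1R : (1 : ℝ) < p := by exact_mod_cast hp.one_lt
        exact zpow_right_injective₀ (by positivity) (ne_of_gt h1R) (hza'.symm.trans hzb')
      omega
    calc ∫⁻ z : ℤ_[p], ENNReal.ofReal (‖z‖ ^ s) ∂μ
        = ∫⁻ z in Set.univ, ENNReal.ofReal (‖z‖ ^ s) ∂μ := (setLIntegral_univ (fun z => ENNReal.ofReal (‖z‖ ^ s))).symm
      _ = ∫⁻ z in ⋃ k, PadicHaarAux.S p k, ENNReal.ofReal (‖z‖ ^ s) ∂μ :=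
          setLIntegral_congr h1
      _ = ∑' k : ℕ, ∫⁻ z in PadicHaarAux.S p k, ENNReal.ofReal (‖z‖ ^ s) ∂μ :=
          lintegral_iUnion (PadicHaarAux.measurableSet_S p) hdisj _
      _ = ∑' k : ℕ, (t * c) ^ k * (1 - c) := by
          congr 1
          ext k
          rw [setLIntegral_congr_fun (PadicHaarAux.measurableSet_S p k)
            (fun z (hz : ‖z‖ = (p : ℝ) ^ (-(k : ℤ))) => by rw [hz]),
            setLIntegral_const, hterm, PadicHaarAux.measure_S p μ hμ]
          have hmeas : ((p : ℝ≥0∞) ^ k)⁻¹ - ((p : ℝ≥0∞) ^ (k + 1))⁻¹ = c ^ k * (1 - c) := by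
            rw [ENNReal.mul_sub (fun _ _ => ENNReal.pow_ne_top hcne), mul_one, ← pow_succ,
              ← ENNReal.inv_pow, ← ENNReal.inv_pow]
          rw [hmeas, ← mul_assoc, mul_pow]
  -- the factor `p ^ (-(s+1))` equals `t * c`
  have hr : (p : ℝ≥0∞) ^ (-(s + 1)) = t * c := by
    have hcast : (p : ℝ≥0∞) = ENNReal.ofReal (p : ℝ) := (ENNReal.ofReal_natCast p).symm
    rw [hcast, ENNReal.ofReal_rpow_of_pos hp0R,
      show -(s + 1) = (-s) + (-1) by ring, Real.rpow_add hp0R,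
      ENNReal.ofReal_mul (Real.rpow_nonneg hp0R.le _), Real.rpow_neg_one, ht, hc, hcast,
      ENNReal.ofReal_inv_of_pos hp0R]
  rw [hI, hr]
  calc ∑' k : ℕ, (t * c) ^ k * (1 - c)
      = (t * c) ^ 0 * (1 - c) + ∑' k : ℕ, (t * c) ^ (k + 1) * (1 - c) :=
        tsum_eq_zero_add' ENNReal.summable
    _ = (t * c) * (∑' k : ℕ, (t * c) ^ k * (1 - c)) + (1 - c) := by
        rw [← ENNReal.tsum_mul_left]
        rw [pow_zero, one_mul, add_comm]
        congr 1
        apply tsum_congr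
        intro k
        ring
end

section
/- Let p be a prime and s a real number. The lower Lebesgue integral ∫⁻_{ℤ_p} ‖z‖^s dμ against the normalized Haar measure μ on ℤ_p is finite if and only if s > -1. (This is the local analytic content of Proposition 2.12: for a discrepancy e_i of an exceptional divisor with rK_X Cartier, taking s = e_i/r, the local p-adic integral ∫_R |z^{e_i} dz^{⊗r}|^{1/r} is finite exactly when e_i/r > -1, i.e. exactly in the log-terminal case.) -/
open MeasureTheory
open scoped ENNReal

variable (p : ℕ) [Fact p.Prime]

/-- The lower Lebesgue integral `∫⁻_{ℤ_p} ‖z‖^s dμ` against the normalized Haar measure is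
finite if and only if `s > -1`.  (The local analytic content of Proposition 2.12: the local
`p`-adic integral is finite exactly in the log-terminal case.) -/
theorem lintegral_norm_rpow_lt_top_iff (μ : Measure ℤ_[p]) [μ.IsAddHaarMeasure]
    (hμ : μ Set.univ = 1) (s : ℝ) :
    (∫⁻ z : ℤ_[p], ENNReal.ofReal (‖z‖ ^ s) ∂μ) < ⊤ ↔ -1 < s := by
  have hp : p.Prime := Fact.out
  have hp1 : (1:ℝ) < p := by exact_mod_cast hp.one_lt
  have hp0 : (0:ℝ) < p := by positivity
  -- the balls
  set B : ℕ → Set ℤ_[p] := fun n => {z | ‖z‖ ≤ (p:ℝ) ^ (-(n:ℤ))} with hBdef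
  have hBmeas : ∀ n, MeasurableSet (B n) := fun n =>
    (isClosed_le continuous_norm continuous_const).measurableSet
  have hfin : ∀ t : Set ℤ_[p], μ t ≠ ⊤ := fun t =>
    ((measure_mono (Set.subset_univ t)).trans hμ.le).trans_lt ENNReal.one_lt_top |>.ne
  -- measure of balls
  have hBmeasure : ∀ n, μ (B n) = ((p:ℝ≥0∞)⁻¹) ^ n := by
    intro n
    have hnz : ((p:ℝ≥0∞)) ^ n ≠ 0 := by
      simp [hp.ne_zero]
    have hnt : ((p:ℝ≥0∞)) ^ n ≠ ⊤ := by
      simp [ENNReal.pow_ne_top, ENNReal.natCast_ne_top]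
    have key : ((p:ℝ≥0∞)) ^ n * μ (B n) = 1 := by
      have hcosetm : ∀ k : ℕ, μ ((fun z : ℤ_[p] => z - (k:ℤ_[p])) ⁻¹' (B n)) = μ (B n) := by
        intro k
        have : (fun z : ℤ_[p] => z - (k:ℤ_[p])) = (fun z : ℤ_[p] => (-(k:ℤ_[p])) + z) := by
          funext z; ring
        rw [this]
        exact measure_preimage_add μ _ _
      have hmem : ∀ (z : ℤ_[p]) (k : ℕ),
          z ∈ (fun z : ℤ_[p] => z - (k:ℤ_[p])) ⁻¹' (B n) ↔
            z - (k:ℤ_[p]) ∈ (Ideal.span {(p : ℤ_[p]) ^ n} : Ideal ℤ_[p]) := by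
        intro z k
        simp only [Set.mem_preimage, hBdef, Set.mem_setOf_eq]
        exact PadicInt.norm_le_pow_iff_mem_span_pow _ n
      have hcover : Set.univ =
          ⋃ k ∈ Finset.range (p ^ n), (fun z : ℤ_[p] => z - (k:ℤ_[p])) ⁻¹' (B n) := by
        ext z
        simp only [Set.mem_univ, true_iff, Set.mem_iUnion, Finset.mem_range]
        exact ⟨z.appr n, z.appr_lt n, (hmem z _).2 (z.appr_spec n)⟩
      have hdisj : (↑(Finset.range (p ^ n)) : Set ℕ).PairwiseDisjoint
          (fun k : ℕ => (fun z : ℤ_[p] => z - (k:ℤ_[p])) ⁻¹' (B n)) := by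
        intro j hj k hk hjk
        simp only [Finset.coe_range, Set.mem_Iio] at hj hk
        refine Set.disjoint_left.2 fun z hzj hzk => hjk ?_
        have hj' := (hmem z j).1 hzj
        have hk' := (hmem z k).1 hzk
        have hsub : (k:ℤ_[p]) - (j:ℤ_[p]) ∈ (Ideal.span {(p : ℤ_[p]) ^ n} : Ideal ℤ_[p]) := by
          have := Ideal.sub_mem _ hj' hk'
          simpa using this
        have hker : (k:ℤ_[p]) - (j:ℤ_[p]) ∈ RingHom.ker (PadicInt.toZModPow (p := p) n) := by
          rwa [PadicInt.ker_toZModPow]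
        rw [RingHom.mem_ker, map_sub, sub_eq_zero, map_natCast, map_natCast] at hker
        haveI : NeZero (p ^ n) := ⟨pow_ne_zero _ hp.ne_zero⟩
        have := congrArg ZMod.val hker
        rw [ZMod.val_cast_of_lt hk, ZMod.val_cast_of_lt hj] at this
        exact this.symm
      have h1 : (1:ℝ≥0∞) =
          ∑ k ∈ Finset.range (p ^ n), μ ((fun z : ℤ_[p] => z - (k:ℤ_[p])) ⁻¹' (B n)) := by
        rw [← hμ, hcover]
        exact measure_biUnion_finset hdisj
          (fun k _ => (hBmeas n).preimage (measurable_id.sub_const _))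
      simp only [hcosetm, Finset.sum_const, Finset.card_range, nsmul_eq_mul,
        Nat.cast_pow] at h1
      exact h1.symm
    calc μ (B n) = ((p:ℝ≥0∞) ^ n)⁻¹ * ((p:ℝ≥0∞) ^ n * μ (B n)) := by
          rw [← mul_assoc, ENNReal.inv_mul_cancel hnz hnt, one_mul]
      _ = ((p:ℝ≥0∞)⁻¹) ^ n := by rw [key, mul_one, ENNReal.inv_pow]
  -- annuli
  set D : ℕ → Set ℤ_[p] := fun n => B n \ B (n+1) with hDdef
  have hDmeas : ∀ n, MeasurableSet (D n) := fun n => (hBmeas n).diff (hBmeas (n+1))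
  have hDnorm : ∀ n, ∀ z ∈ D n, ‖z‖ = (p:ℝ) ^ (-(n:ℤ)) := by
    intro n z hz
    simp only [hDdef, hBdef, Set.mem_diff, Set.mem_setOf_eq, not_le] at hz
    obtain ⟨h1', h2'⟩ := hz
    have hz0 : z ≠ 0 := by
      rintro rfl
      rw [norm_zero] at h2'
      exact absurd h2' (not_lt.2 (by positivity))
    rw [PadicInt.norm_eq_zpow_neg_valuation hz0] at h1' h2' ⊢
    congr 1
    have hv1 : -z.valuation ≤ -(n:ℤ) := (zpow_le_zpow_iff_right₀ hp1).1 h1'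
    have hv2 : (-(↑(n+1):ℤ)) < -z.valuation := (zpow_lt_zpow_iff_right₀ hp1).1 h2'
    push_cast at hv2
    omega
  have hDdisj : Pairwise (Function.onFun Disjoint D) := by
    intro m n hmn
    refine Set.disjoint_left.2 fun z hzm hzn => hmn ?_
    have h1 := hDnorm m z hzm
    have h2 := hDnorm n z hzn
    have := h1.symm.trans h2
    have := zpow_right_injective₀ hp0 hp1.ne' this
    omega
  have hDmeasure : ∀ n, μ (D n) = ((p:ℝ≥0∞)⁻¹) ^ n - ((p:ℝ≥0∞)⁻¹) ^ (n+1) := by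
    intro n
    have hsub : B (n+1) ⊆ B n := by
      intro z hz
      simp only [hBdef, Set.mem_setOf_eq] at hz ⊢
      refine hz.trans ?_
      refine (zpow_le_zpow_iff_right₀ hp1).2 ?_
      push_cast
      omega
    rw [hDdef]
    rw [measure_diff hsub (hBmeas (n+1)).nullMeasurableSet (hfin _),
      hBmeasure, hBmeasure]
  have hUnion : (⋃ n, D n) = {(0:ℤ_[p])}ᶜ := by
    ext z
    simp only [Set.mem_iUnion, Set.mem_compl_iff, Set.mem_singleton_iff]
    constructor
    · rintro ⟨n, hn⟩ rfl
      have := hDnorm n 0 hn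
      rw [norm_zero] at this
      have hpos : (0:ℝ) < (p:ℝ) ^ (-(n:ℤ)) := by positivity
      exact absurd this.symm hpos.ne'
    · intro hz0
      have hv0 : (0:ℤ) ≤ z.valuation := Int.natCast_nonneg _
      refine ⟨(z.valuation : ℤ).toNat, ?_⟩
      simp only [hDdef, hBdef, Set.mem_diff, Set.mem_setOf_eq, not_le]
      rw [PadicInt.norm_eq_zpow_neg_valuation hz0]
      constructor
      · refine (zpow_le_zpow_iff_right₀ hp1).2 ?_
        rw [Int.toNat_of_nonneg hv0]
      · refine (zpow_lt_zpow_iff_right₀ hp1).2 ?_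
        push_cast [Int.toNat_of_nonneg hv0]
        omega
  have h0 : μ {(0:ℤ_[p])} = 0 := by
    have hle : ∀ n, μ {(0:ℤ_[p])} ≤ ((p:ℝ≥0∞)⁻¹) ^ n := fun n => by
      rw [← hBmeasure n]
      refine measure_mono fun z hz => ?_
      simp only [Set.mem_singleton_iff] at hz
      subst hz
      simp only [hBdef, Set.mem_setOf_eq, norm_zero]
      positivity
    have htend : Filter.Tendsto (fun n => ((p:ℝ≥0∞)⁻¹) ^ n) Filter.atTop (nhds 0) :=
      ENNReal.tendsto_pow_atTop_nhds_zero_of_lt_one (by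
        rw [ENNReal.inv_lt_one]; exact_mod_cast hp.one_lt)
    exact le_antisymm (ge_of_tendsto' htend hle) (zero_le)
  have hae : (⋃ n, D n) =ᵐ[μ] (Set.univ : Set ℤ_[p]) := by
    rw [MeasureTheory.ae_eq_univ, hUnion, compl_compl]
    exact h0
  have hint : (∫⁻ z : ℤ_[p], ENNReal.ofReal (‖z‖ ^ s) ∂μ)
      = ∑' n : ℕ, ENNReal.ofReal (((p:ℝ) ^ (-(n:ℤ))) ^ s) * μ (D n) := by
    rw [← setLIntegral_univ, ← setLIntegral_congr hae, lintegral_iUnion hDmeas hDdisj]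
    refine tsum_congr fun n => ?_
    rw [setLIntegral_congr_fun (hDmeas n)
      (fun z hz => by rw [hDnorm n z hz]),
      setLIntegral_const]
  set q : ℝ≥0∞ := (p:ℝ≥0∞)⁻¹ with hqdef
  set a : ℝ≥0∞ := ENNReal.ofReal ((p:ℝ) ^ (-s)) * q with hadef
  have hq1 : q < 1 := by rw [hqdef, ENNReal.inv_lt_one]; exact_mod_cast hp.one_lt
  have hterm : ∀ n : ℕ, ENNReal.ofReal (((p:ℝ) ^ (-(n:ℤ))) ^ s) * μ (D n)
      = a ^ n * (1 - q) := by
    intro n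
    rw [hDmeasure n]
    have h1 : ((p:ℝ) ^ (-(n:ℤ))) ^ s = ((p:ℝ) ^ (-s)) ^ n := by
      rw [← Real.rpow_intCast (p:ℝ) (-(n:ℤ)), ← Real.rpow_natCast ((p:ℝ) ^ (-s)) n,
        ← Real.rpow_mul hp0.le, ← Real.rpow_mul hp0.le]
      congr 1
      push_cast
      ring
    have h2 : q ^ n - q ^ (n+1) = q ^ n * (1 - q) := by
      rw [ENNReal.mul_sub (fun _ _ => ENNReal.pow_ne_top (hq1.trans ENNReal.one_lt_top).ne),
        mul_one, pow_succ]
    rw [h1, ENNReal.ofReal_pow (by positivity), h2, hadef, mul_pow]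
    ring
  rw [hint]
  rw [tsum_congr hterm, ENNReal.tsum_mul_right, ENNReal.tsum_geometric]
  have ha : a < 1 ↔ -1 < s := by
    have haval : a = ENNReal.ofReal ((p:ℝ) ^ (-(s+1))) := by
      rw [hadef, hqdef, show ((p:ℝ≥0∞))⁻¹ = ENNReal.ofReal ((p:ℝ)⁻¹) by
          rw [ENNReal.ofReal_inv_of_pos hp0, ENNReal.ofReal_natCast],
        ← ENNReal.ofReal_mul (by positivity)]
      congr 1
      rw [← Real.rpow_neg_one (p:ℝ), ← Real.rpow_add hp0]
      ring_nf
    rw [haval, ENNReal.ofReal_lt_one, Real.rpow_lt_one_iff_of_pos hp0]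
    constructor
    · rintro (⟨_, h⟩ | ⟨h, _⟩) <;> linarith
    · intro h; exact Or.inl ⟨hp1, by linarith⟩
  have h1q_ne : (1:ℝ≥0∞) - q ≠ 0 := (tsub_pos_of_lt hq1).ne'
  constructor
  · intro h
    by_contra hs
    have ha1 : ¬ a < 1 := fun h' => hs (ha.1 h')
    have hz : (1:ℝ≥0∞) - a = 0 := tsub_eq_zero_of_le (not_lt.1 ha1)
    rw [hz, ENNReal.inv_zero, ENNReal.top_mul h1q_ne] at h
    exact absurd h (lt_irrefl ⊤)
  · intro h
    exact ENNReal.mul_lt_top (ENNReal.inv_lt_top.2 (tsub_pos_of_lt (ha.2 h)))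
      ((tsub_le_self).trans_lt ENNReal.one_lt_top)
end
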